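/- If Q is a finite interval order and A, B are disjoint subsets of Q, then there exists a linear extension L of Q such that for every a in A and b in B with a incomparable to b in Q, we have b < a in L. -/
import Mathlib


/-- Two elements are incomparable in a poset. -/
def Incomp {α : Type*} [PartialOrder α] (x y : α) : Prop := ¬ x ≤ y ∧ ¬ y ≤ x

/-- The poset contains a subposet isomorphic to 2+2 (two disjoint 2-chains). -/
def HasTwoPlusTwo (α : Type*) [PartialOrder α] : Prop :=
  ∃ a₁ b₁ a₂ b₂ : α, a₁ < b₁ ∧ a₂ < b₂ ∧
    Incomp a₁ a₂ ∧ Incomp a₁ b₂ ∧ Incomp b₁ a₂ ∧ Incomp b₁ b₂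

/-- `L` is a linear extension of the partial order on `α`. -/
def IsLinearExtension {α : Type*} [PartialOrder α] (L : α → α → Prop) : Prop :=
  IsLinearOrder α L ∧ ∀ x y : α, x ≤ y → L x y

theorem stmt_4 {α : Type*} [Fintype α] [PartialOrder α] (h : ¬ HasTwoPlusTwo α)
    (A B : Set α) (hAB : Disjoint A B) :
    ∃ L : α → α → Prop, IsLinearExtension L ∧
      ∀ a ∈ A, ∀ b ∈ B, Incomp a b → L b a ∧ ¬ L a b := by
  -- 2+2-freeness in "interval order" form
  have key : ∀ x y z w : α, x < y → z < w → x ≤ w ∨ z ≤ y := by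
    intro x y z w hxy hzw
    by_contra hc
    push_neg at hc
    obtain ⟨h1, h2⟩ := hc
    exact h ⟨x, y, z, w, hxy, hzw,
      ⟨fun hxz => h1 (hxz.trans hzw.le), fun hzx => h2 (hzx.trans hxy.le)⟩,
      ⟨h1, fun hwx => h2 ((hzw.le.trans hwx).trans hxy.le)⟩,
      ⟨fun hyz => h1 ((hxy.le.trans hyz).trans hzw.le), h2⟩,
      ⟨fun hyw => h1 (hxy.le.trans hyw), fun hwy => h2 (hzw.le.trans hwy)⟩⟩
  have hne : ∀ a ∈ A, ∀ b ∈ B, a ≠ b := by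
    intro a ha b hb hab
    exact Set.disjoint_left.mp hAB ha (hab ▸ hb)
  -- the auxiliary relation
  let r : α → α → Prop := fun x y =>
    x ≤ y ∨ ∃ a ∈ A, ∃ b ∈ B, Incomp a b ∧ x ≤ b ∧ a ≤ y
  haveI hpo : IsPartialOrder α r := by
    refine { refl := fun x => Or.inl le_rfl, trans := ?_, antisymm := ?_ }
    · rintro x y z (hxy | ⟨a1, ha1, b1, hb1, inc1, hx1, hy1⟩)
        (hyz | ⟨a2, ha2, b2, hb2, inc2, hy2, hz2⟩)
      · exact Or.inl (hxy.trans hyz)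
      · exact Or.inr ⟨a2, ha2, b2, hb2, inc2, hxy.trans hy2, hz2⟩
      · exact Or.inr ⟨a1, ha1, b1, hb1, inc1, hx1, hy1.trans hyz⟩
      · have ha1b2 : a1 < b2 :=
          lt_of_le_of_ne (hy1.trans hy2) (hne a1 ha1 b2 hb2)
        by_cases hba : b1 ≤ a2
        · exact Or.inl (hx1.trans (hba.trans hz2))
        by_cases hab : a2 ≤ b1
        · have ha2b1 : a2 < b1 := lt_of_le_of_ne hab (hne a2 ha2 b1 hb1)
          rcases key a2 b1 a1 b2 ha2b1 ha1b2 with hk | hk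
          · exact absurd hk inc2.1
          · exact absurd hk inc1.1
        · exact Or.inr ⟨a2, ha2, b1, hb1, ⟨hab, hba⟩, hx1, hz2⟩
    · rintro x y (hxy | ⟨a1, ha1, b1, hb1, inc1, hx1, hy1⟩)
        (hyx | ⟨a2, ha2, b2, hb2, inc2, hy2, hx2⟩)
      · exact le_antisymm hxy hyx
      · exact (inc2.1 ((hx2.trans hxy).trans hy2)).elim
      · exact (inc1.1 ((hy1.trans hyx).trans hx1)).elim
      · have ha1b2 : a1 < b2 := lt_of_le_of_ne (hy1.trans hy2) (hne a1 ha1 b2 hb2)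
        have ha2b1 : a2 < b1 := lt_of_le_of_ne (hx2.trans hx1) (hne a2 ha2 b1 hb1)
        rcases key a2 b1 a1 b2 ha2b1 ha1b2 with hk | hk
        · exact absurd hk inc2.1
        · exact absurd hk inc1.1
  obtain ⟨s, hs, hrs⟩ := extend_partialOrder r
  refine ⟨s, ⟨hs, fun x y hxy => hrs x y (Or.inl hxy)⟩, ?_⟩
  intro a ha b hb inc
  have hba : s b a := hrs b a (Or.inr ⟨a, ha, b, hb, inc, le_rfl, le_rfl⟩)
  refine ⟨hba, fun hab => ?_⟩
  haveI := hs
  have : a = b := antisymm hab hba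
  exact inc.1 (this ▸ le_rfl)
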